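/- Let T = 2 and L = ℓ = 1, and let P2 be the set of all (x1,x2,y1,y2,u2) ∈ ℝ^2 × {0,1}^2 × {0,1} with x1,x2 ≥ 0 satisfying: u2 ≤ y2; y1 + u2 ≤ 1; y2 − y1 ≤ u2; Cmin·y_t ≤ x_t ≤ Cmax·y_t for t = 1,2; x2 − x1 ≤ V·y1 + W·(1−y1); and x1 − x2 ≤ V·y2 + W·(1−y2). Define Q2 ⊆ ℝ^5 by the inequalities: u2 ≥ 0; u2 ≥ y2 − y1; u2 ≤ y2; y1 + u2 ≤ 1; x1 ≥ Cmin·y1; x2 ≥ Cmin·y2; x1 ≤ W·y1 + (Cmax−W)·(y2−u2); x2 ≤ Cmax·y2 − (Cmax−W)·u2; x2 − x1 ≤ (Cmin+V)·y2 − Cmin·y1 − (Cmin+V−W)·u2; and x1 − x2 ≤ W·y1 − (W−V)·y2 − (Cmin+V−W)·u2; and define Q̄2 ⊆ ℝ^5 by the first eight of these inequalities (omitting the last two). Then: if Cmax − Cmin − V ≥ 0, the convex hull of P2 equals Q2; and if Cmax − Cmin − V < 0, the convex hull of P2 equals Q̄2. -/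

import Mathlib

noncomputable section

open Set

set_option maxHeartbeats 1000000

/-- Coordinates of `z : Fin 5 → ℝ`:
`z 0 = x1`, `z 1 = x2`, `z 2 = y1`, `z 3 = y2`, `z 4 = u2`. -/
def P2 (Cmin Cmax V W : ℝ) : Set (Fin 5 → ℝ) :=
  {z | (z 2 = 0 ∨ z 2 = 1) ∧ (z 3 = 0 ∨ z 3 = 1) ∧ (z 4 = 0 ∨ z 4 = 1) ∧
       0 ≤ z 0 ∧ 0 ≤ z 1 ∧
       z 4 ≤ z 3 ∧ z 2 + z 4 ≤ 1 ∧ z 3 - z 2 ≤ z 4 ∧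
       Cmin * z 2 ≤ z 0 ∧ z 0 ≤ Cmax * z 2 ∧
       Cmin * z 3 ≤ z 1 ∧ z 1 ≤ Cmax * z 3 ∧
       z 1 - z 0 ≤ V * z 2 + W * (1 - z 2) ∧
       z 0 - z 1 ≤ V * z 3 + W * (1 - z 3)}

/-- The two-period polyhedron `Q2`. -/
def Q2 (Cmin Cmax V W : ℝ) : Set (Fin 5 → ℝ) :=
  {z | 0 ≤ z 4 ∧ z 3 - z 2 ≤ z 4 ∧
       z 4 ≤ z 3 ∧ z 2 + z 4 ≤ 1 ∧
       Cmin * z 2 ≤ z 0 ∧ Cmin * z 3 ≤ z 1 ∧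
       z 0 ≤ W * z 2 + (Cmax - W) * (z 3 - z 4) ∧
       z 1 ≤ Cmax * z 3 - (Cmax - W) * z 4 ∧
       z 1 - z 0 ≤ (Cmin + V) * z 3 - Cmin * z 2 - (Cmin + V - W) * z 4 ∧
       z 0 - z 1 ≤ W * z 2 - (W - V) * z 3 - (Cmin + V - W) * z 4}

/-- The two-period polyhedron `Q̄2` (the first eight inequalities of `Q2`). -/
def Q2bar (Cmin Cmax V W : ℝ) : Set (Fin 5 → ℝ) :=
  {z | 0 ≤ z 4 ∧ z 3 - z 2 ≤ z 4 ∧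
       z 4 ≤ z 3 ∧ z 2 + z 4 ≤ 1 ∧
       Cmin * z 2 ≤ z 0 ∧ Cmin * z 3 ≤ z 1 ∧
       z 0 ≤ W * z 2 + (Cmax - W) * (z 3 - z 4) ∧
       z 1 ≤ Cmax * z 3 - (Cmax - W) * z 4}

lemma pick_cd (lI hI lJ hJ V : ℝ) (hV : 0 ≤ V) (h1 : lI ≤ hI) (h2 : lJ ≤ hJ)
    (h3 : lJ ≤ hI + V) (h4 : lI ≤ hJ + V) :
    ∃ c d, lI ≤ c ∧ c ≤ hI ∧ lJ ≤ d ∧ d ≤ hJ ∧ c - d ≤ V ∧ d - c ≤ V := by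
  refine ⟨max lI (min hI lJ), max lJ (min hJ (max lI (min hI lJ))), le_max_left _ _,
    max_le h1 (min_le_left _ _), le_max_left _ _,
    max_le h2 (min_le_left _ _), ?_, ?_⟩ <;>
  · rcases le_total hI lJ with h5 | h5 <;> rcases le_total lI (min hI lJ) with h6 | h6 <;>
      rcases le_total lJ (min hJ (max lI (min hI lJ))) with h7 | h7 <;>
      rcases le_total hJ (max lI (min hI lJ)) with h8 | h8 <;>
      simp [max_def, min_def, h5, h6, h7, h8] <;>
      simp [max_def, min_def, h5, h6, h7, h8] at h6 h7 h8 ⊢ <;>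
      split_ifs at * <;> linarith

lemma solve1 (Cmin W p ν c μ : ℝ) (hμ : 0 ≤ μ) (hCW : Cmin ≤ W)
    (hlow : p - W * μ ≤ ν * c) (hhigh : ν * c ≤ p - Cmin * μ) :
    ∃ a, Cmin ≤ a ∧ a ≤ W ∧ μ * a + ν * c = p := by
  rcases eq_or_lt_of_le hμ with h | h
  · exact ⟨Cmin, le_refl _, hCW, by nlinarith⟩
  · refine ⟨(p - ν * c) / μ, ?_, ?_, by field_simp; ring⟩
    · rw [le_div_iff₀ h]; linarith
    · rw [div_le_iff₀ h]; linarith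

lemma mem_hull (Cmin Cmax V W : ℝ)
    (hV : 0 < V) (hC0 : 0 ≤ Cmin) (hCW : Cmin ≤ W) (hWC : W ≤ Cmax)
    (z : Fin 5 → ℝ) (μA μB μC μD a b c d : ℝ)
    (hA : 0 ≤ μA) (hB : 0 ≤ μB) (hC : 0 ≤ μC) (hD : 0 ≤ μD)
    (hsum : μA + μB + μC + μD = 1)
    (ha1 : Cmin ≤ a) (ha2 : a ≤ W) (hb1 : Cmin ≤ b) (hb2 : b ≤ W)
    (hc1 : Cmin ≤ c) (hc2 : c ≤ Cmax) (hd1 : Cmin ≤ d) (hd2 : d ≤ Cmax)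
    (hdc : d - c ≤ V) (hcd : c - d ≤ V)
    (hz0 : z 0 = μC * a + μD * c) (hz1 : z 1 = μB * b + μD * d)
    (hz2 : z 2 = μC + μD) (hz3 : z 3 = μB + μD) (hz4 : z 4 = μB) :
    z ∈ convexHull ℝ (P2 Cmin Cmax V W) := by
  have hz : z = ∑ i : Fin 4,
      (![μA, μB, μC, μD] : Fin 4 → ℝ) i •
      (![![0,0,0,0,0], ![0,b,0,1,1], ![a,0,1,0,0], ![c,d,1,1,0]] : Fin 4 → (Fin 5 → ℝ)) i := by
    funext j
    fin_cases j <;>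
      simp [Fin.sum_univ_four, Matrix.vecHead, Matrix.vecTail] <;> linarith
  rw [hz]
  refine (convex_convexHull ℝ _).sum_mem ?_ ?_ ?_
  · intro i _; fin_cases i <;> simpa
  · simp [Fin.sum_univ_four]; linarith
  · intro i _
    apply subset_convexHull
    fin_cases i <;>
      · simp only [P2, mem_setOf_eq]
        norm_num [Matrix.cons_val_zero, Matrix.cons_val_one, Matrix.vecHead, Matrix.vecTail]
        simp
        repeat' apply And.intro
        all_goals linarith

lemma Q2_subset_hull (Cmin Cmax V W : ℝ)
    (hV : 0 < V) (hC0 : 0 ≤ Cmin) (hCW : Cmin ≤ W) (hWV : W < Cmin + V) (hWC : W ≤ Cmax) :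
    Q2 Cmin Cmax V W ⊆ convexHull ℝ (P2 Cmin Cmax V W) := by
  intro z hz
  obtain ⟨q1, q2, q3, q4, q5, q6, q7, q8, q9, q10⟩ := hz
  have hminmax : Cmin ≤ Cmax := le_trans hCW hWC
  rcases eq_or_lt_of_le (show (0:ℝ) ≤ z 3 - z 4 by linarith) with hD0 | hDpos
  · -- degenerate case: μD = 0, i.e. z 3 = z 4
    have e3 : z 3 = z 4 := by linarith
    have eC : Cmin * z 3 = Cmin * z 4 := by rw [e3]
    have eW : W * z 3 = W * z 4 := by rw [e3]
    have eM : Cmax * z 3 = Cmax * z 4 := by rw [e3]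
    have e7 : z 0 ≤ W * (z 2 - z 3 + z 4) := by linarith [q7]
    obtain ⟨a, ha1, ha2, ha3⟩ := solve1 Cmin W (z 0) 0 Cmin (z 2 - z 3 + z 4)
      (by linarith) hCW (by linarith [e7]) (by linarith [q5, eC])
    have e8 : z 1 ≤ W * z 4 := by linarith [q8, eM]
    obtain ⟨b, hb1, hb2, hb3⟩ := solve1 Cmin W (z 1) 0 Cmin (z 4)
      q1 hCW (by linarith [e8]) (by linarith [q6, eC])
    exact mem_hull Cmin Cmax V W hV hC0 hCW hWC z
      (1 - z 2 - z 4) (z 4) (z 2 - z 3 + z 4) 0 a b Cmin Cmin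
      (by linarith) q1 (by linarith) le_rfl (by linarith)
      ha1 ha2 hb1 hb2 le_rfl hminmax le_rfl hminmax
      (by linarith) (by linarith)
      ha3.symm hb3.symm (by linarith) (by linarith) rfl
  · -- main case: μD = z 3 - z 4 > 0
    have hDne : z 3 - z 4 ≠ 0 := ne_of_gt hDpos
    -- interval endpoints
    set A1 := (z 0 - W * (z 2 - z 3 + z 4)) / (z 3 - z 4) with hA1
    set A2 := (z 0 - Cmin * (z 2 - z 3 + z 4)) / (z 3 - z 4) with hA2
    set B1 := (z 1 - W * (z 4)) / (z 3 - z 4) with hB1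
    set B2 := (z 1 - Cmin * (z 4)) / (z 3 - z 4) with hB2
    have hC : (0:ℝ) ≤ z 2 - z 3 + z 4 := by linarith
    have f2 : Cmin ≤ A2 := by rw [hA2, le_div_iff₀ hDpos]; linarith [q5]
    have f3 : A1 ≤ Cmax := by rw [hA1, div_le_iff₀ hDpos]; linarith [q7]
    have f4 : A1 ≤ A2 := by
      rw [hA1, hA2, div_le_div_iff₀ hDpos hDpos]
      linarith [mul_nonneg (mul_nonneg (sub_nonneg.mpr hCW) hC) (le_of_lt hDpos)]
    have f5 : Cmin ≤ B2 := by rw [hB2, le_div_iff₀ hDpos]; linarith [q6]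
    have f6 : B1 ≤ Cmax := by rw [hB1, div_le_iff₀ hDpos]; linarith [q8]
    have f7 : B1 ≤ B2 := by
      rw [hB1, hB2, div_le_div_iff₀ hDpos hDpos]
      linarith [mul_nonneg (mul_nonneg (sub_nonneg.mpr hCW) q1) (le_of_lt hDpos)]
    have f8 : B1 ≤ A2 + V := by
      rw [hB1, hA2, div_le_iff₀ hDpos, add_mul, div_mul_cancel₀ _ hDne]
      linarith [q9]
    have f9 : A1 ≤ B2 + V := by
      rw [hA1, hB2, div_le_iff₀ hDpos, add_mul, div_mul_cancel₀ _ hDne]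
      linarith [q10]
    obtain ⟨c, d, hc1, hc2, hd1, hd2, hcd, hdc⟩ :=
      pick_cd (max Cmin A1) (min Cmax A2) (max Cmin B1) (min Cmax B2) V (le_of_lt hV)
        (max_le (le_min hminmax f2) (le_min f3 f4))
        (max_le (le_min hminmax f5) (le_min f6 f7))
        (by rw [← min_add_add_right]
            exact max_le (le_min (by linarith) (by linarith)) (le_min (by linarith) f8))
        (by rw [← min_add_add_right]
            exact max_le (le_min (by linarith) (by linarith)) (le_min (by linarith) f9))
    have hcl : Cmin ≤ c := le_trans (le_max_left _ _) hc1
    have hcu : c ≤ Cmax := le_trans hc2 (min_le_left _ _)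
    have hdl : Cmin ≤ d := le_trans (le_max_left _ _) hd1
    have hdu : d ≤ Cmax := le_trans hd2 (min_le_left _ _)
    have hcA1 : A1 ≤ c := le_trans (le_max_right _ _) hc1
    have hcA2 : c ≤ A2 := le_trans hc2 (min_le_right _ _)
    have hdB1 : B1 ≤ d := le_trans (le_max_right _ _) hd1
    have hdB2 : d ≤ B2 := le_trans hd2 (min_le_right _ _)
    have gc1 : z 0 - W * (z 2 - z 3 + z 4) ≤ (z 3 - z 4) * c := by
      have := (div_le_iff₀ hDpos).mp hcA1; linarith
    have gc2 : (z 3 - z 4) * c ≤ z 0 - Cmin * (z 2 - z 3 + z 4) := by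
      have := (le_div_iff₀ hDpos).mp hcA2; linarith
    have gd1 : z 1 - W * (z 4) ≤ (z 3 - z 4) * d := by
      have := (div_le_iff₀ hDpos).mp hdB1; linarith
    have gd2 : (z 3 - z 4) * d ≤ z 1 - Cmin * (z 4) := by
      have := (le_div_iff₀ hDpos).mp hdB2; linarith
    obtain ⟨a, ha1, ha2, ha3⟩ := solve1 Cmin W (z 0) (z 3 - z 4) c (z 2 - z 3 + z 4)
      hC hCW gc1 gc2
    obtain ⟨b, hb1, hb2, hb3⟩ := solve1 Cmin W (z 1) (z 3 - z 4) d (z 4)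
      q1 hCW gd1 gd2
    exact mem_hull Cmin Cmax V W hV hC0 hCW hWC z
      (1 - z 2 - z 4) (z 4) (z 2 - z 3 + z 4) (z 3 - z 4) a b c d
      (by linarith) q1 hC (by linarith) (by ring)
      ha1 ha2 hb1 hb2 hcl hcu hdl hdu hdc hcd
      ha3.symm hb3.symm (by ring) (by ring) rfl

theorem two_period_convex_hull (Cmin Cmax V W : ℝ)
    (hV : 0 < V) (hC0 : 0 ≤ Cmin) (hCW : Cmin ≤ W) (hWV : W < Cmin + V) (hWC : W ≤ Cmax) :
    (0 ≤ Cmax - Cmin - V →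
      convexHull ℝ (P2 Cmin Cmax V W) = Q2 Cmin Cmax V W) ∧
    (Cmax - Cmin - V < 0 →
      convexHull ℝ (P2 Cmin Cmax V W) = Q2bar Cmin Cmax V W) := by
  have hP2Q2 : P2 Cmin Cmax V W ⊆ Q2 Cmin Cmax V W := by
    intro z hz
    obtain ⟨h2, h3, h4, hx0, hx1, hu, hyu, hyy, hl1, hu1, hl2, hu2, hr1, hr2⟩ := hz
    simp only [Q2, mem_setOf_eq]
    rcases h2 with h2 | h2 <;> rcases h3 with h3 | h3 <;> rcases h4 with h4 | h4 <;>
      simp only [h2, h3, h4] at * <;> norm_num at * <;>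
      (repeat' apply And.intro) <;> linarith
  have hconv : Convex ℝ (Q2 Cmin Cmax V W) := by
    intro x hx y hy s t hs ht hst
    obtain ⟨p1, p2, p3, p4, p5, p6, p7, p8, p9, p10⟩ := hx
    obtain ⟨r1, r2, r3, r4, r5, r6, r7, r8, r9, r10⟩ := hy
    simp only [Q2, mem_setOf_eq, Pi.add_apply, Pi.smul_apply, smul_eq_mul]
    refine ⟨by linarith [mul_le_mul_of_nonneg_left p1 hs, mul_le_mul_of_nonneg_left r1 ht],
      by linarith [mul_le_mul_of_nonneg_left p2 hs, mul_le_mul_of_nonneg_left r2 ht],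
      by linarith [mul_le_mul_of_nonneg_left p3 hs, mul_le_mul_of_nonneg_left r3 ht],
      by linarith [mul_le_mul_of_nonneg_left p4 hs, mul_le_mul_of_nonneg_left r4 ht],
      by linarith [mul_le_mul_of_nonneg_left p5 hs, mul_le_mul_of_nonneg_left r5 ht],
      by linarith [mul_le_mul_of_nonneg_left p6 hs, mul_le_mul_of_nonneg_left r6 ht],
      by linarith [mul_le_mul_of_nonneg_left p7 hs, mul_le_mul_of_nonneg_left r7 ht],
      by linarith [mul_le_mul_of_nonneg_left p8 hs, mul_le_mul_of_nonneg_left r8 ht],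
      by linarith [mul_le_mul_of_nonneg_left p9 hs, mul_le_mul_of_nonneg_left r9 ht],
      by linarith [mul_le_mul_of_nonneg_left p10 hs, mul_le_mul_of_nonneg_left r10 ht]⟩
  have hmain : convexHull ℝ (P2 Cmin Cmax V W) = Q2 Cmin Cmax V W :=
    subset_antisymm (convexHull_min hP2Q2 hconv)
      (Q2_subset_hull Cmin Cmax V W hV hC0 hCW hWV hWC)
  refine ⟨fun _ => hmain, fun hlt => ?_⟩
  rw [hmain]
  apply subset_antisymm
  · rintro z ⟨q1, q2, q3, q4, q5, q6, q7, q8, _, _⟩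
    exact ⟨q1, q2, q3, q4, q5, q6, q7, q8⟩
  · rintro z ⟨q1, q2, q3, q4, q5, q6, q7, q8⟩
    have key : (Cmax - Cmin - V) * (z 3 - z 4) ≤ 0 :=
      mul_nonpos_of_nonpos_of_nonneg (le_of_lt hlt) (by linarith)
    refine ⟨q1, q2, q3, q4, q5, q6, q7, q8, by nlinarith [q8, q5, key], by nlinarith [q7, q6, key]⟩
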